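/- Let G be a finite group and let x_1, …, x_{k(G)} be a full set of representatives of the conjugacy classes of G. For every complex irreducible character χ of G, ⟨t_3, χ⟩ = Σ_{i=1}^{k(G)} (|G|/χ(1)) · |χ(x_i)|². -/

import Mathlib

open Module LinearMap Polynomial

lemma char_inv {G : Type} [Group G] [Fintype G] (V : FDRep ℂ G) (g : G) :
    V.character g⁻¹ = (starRingEnd ℂ) (V.character g) := by
  classical
  set n := Fintype.card G with hn
  have hn0 : n ≠ 0 := Fintype.card_ne_zero
  set f : Module.End ℂ V := V.ρ g with hf
  set f' : Module.End ℂ V := V.ρ g⁻¹ with hf'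
  have hfn : f ^ n = 1 := by
    rw [hf, ← map_pow, pow_card_eq_one, map_one]
  have hsq : Squarefree ((X : ℂ[X]) ^ n - 1) :=
    (Polynomial.X_pow_sub_one_separable_iff.mpr (by exact_mod_cast (Nat.cast_ne_zero (R := ℂ)).mpr hn0)).squarefree
  have hss : f.IsSemisimple :=
    Module.End.isSemisimple_of_squarefree_aeval_eq_zero hsq (by
      simp [map_sub, aeval_X_pow, hfn])
  set E : ℂ → Submodule ℂ V := f.eigenspace with hE
  have hEq : ∀ μ, f.maxGenEigenspace μ = E μ :=
    fun μ => hss.isFinitelySemisimple.maxGenEigenspace_eq_eigenspace μ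
  have hInt : DirectSum.IsInternal E := by
    rw [DirectSum.isInternal_submodule_iff_iSupIndep_and_iSup_eq_top]
    constructor
    · have := f.independent_maxGenEigenspace
      simpa [funext hEq] using this
    · have := Module.End.iSup_maxGenEigenspace_eq_top f
      simpa [funext hEq] using this
  -- eigenvalues satisfy μ ^ n = 1
  have hroot : ∀ μ : ℂ, E μ ≠ ⊥ → μ ^ n = 1 := by
    intro μ hμ
    have hev : Module.End.HasEigenvalue f μ := hμ
    obtain ⟨v, hv⟩ := hev.exists_hasEigenvector
    have hv0 := hv.2
    have : (f ^ n) v = μ ^ n • v := hv.pow_apply n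
    rw [hfn] at this
    have h2 : (μ ^ n - 1) • v = 0 := by
      rw [sub_smul, one_smul, ← this]; simp
    have h3 : μ ^ n - 1 = 0 := (smul_eq_zero.mp h2).resolve_right hv0
    exact sub_eq_zero.mp h3
  have hfin : {μ | E μ ≠ ⊥}.Finite := by
    have hp : ((X : ℂ[X]) ^ n - 1) ≠ 0 := by
      intro h
      have := hsq
      rw [h] at this
      exact not_squarefree_zero this
    refine Set.Finite.subset (Polynomial.finite_setOf_isRoot hp) ?_
    intro μ hμ
    simp only [Set.mem_setOf_eq, IsRoot.def, eval_sub, eval_pow, eval_X, eval_one]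
    rw [hroot μ hμ, sub_self]
  have hmapsf : ∀ μ, Set.MapsTo f (E μ) (E μ) := by
    intro μ x hx
    have hx' : f x = μ • x := Module.End.mem_eigenspace_iff.mp hx
    exact Module.End.mem_eigenspace_iff.mpr (by rw [hx', map_smul, hx'])
  have hcomm : f' * f = f * f' := by
    rw [hf, hf', ← map_mul, ← map_mul, inv_mul_cancel, mul_inv_cancel]
  have hmapsf' : ∀ μ, Set.MapsTo f' (E μ) (E μ) := by
    intro μ x hx
    have hx' : f x = μ • x := Module.End.mem_eigenspace_iff.mp hx
    refine Module.End.mem_eigenspace_iff.mpr ?_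
    have : f (f' x) = f' (f x) := by
      have := congrArg (fun T : Module.End ℂ V => T x) hcomm
      simpa [Module.End.mul_apply] using this.symm
    rw [this, hx', map_smul]
  have hrestrf : ∀ μ ∈ hfin.toFinset,
      (trace ℂ (E μ)) (f.restrict (hmapsf μ)) = μ * (finrank ℂ (E μ) : ℂ) := by
    intro μ hμ
    have : f.restrict (hmapsf μ) = μ • (LinearMap.id : E μ →ₗ[ℂ] E μ) := by
      ext x
      have hx' : f (x : V) = μ • (x : V) := Module.End.mem_eigenspace_iff.mp x.2
      simp [LinearMap.restrict_apply, hx']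
      exact hx'
    rw [this, map_smul, trace_id]
    simp [mul_comm]
  have hrestrf' : ∀ μ ∈ hfin.toFinset,
      (trace ℂ (E μ)) (f'.restrict (hmapsf' μ)) = μ⁻¹ * (finrank ℂ (E μ) : ℂ) := by
    intro μ hμ
    have hμn : μ ^ n = 1 := hroot μ (by simpa using hμ)
    have hμ0 : μ ≠ 0 := by
      intro h; rw [h] at hμn; simp [zero_pow hn0] at hμn
    have : f'.restrict (hmapsf' μ) = μ⁻¹ • (LinearMap.id : E μ →ₗ[ℂ] E μ) := by
      ext x
      have hx' : f (x : V) = μ • (x : V) := Module.End.mem_eigenspace_iff.mp x.2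
      have hff' : f (f' (x : V)) = (x : V) := by
        rw [hf, hf']
        have : (V.ρ g * V.ρ g⁻¹) (x : V) = (x : V) := by
          rw [← map_mul, mul_inv_cancel, map_one]; rfl
        simpa [Module.End.mul_apply] using this
      have hmem : f' (x : V) ∈ E μ := hmapsf' μ x.2
      have hfx : f (f' (x : V)) = μ • f' (x : V) := Module.End.mem_eigenspace_iff.mp hmem
      have : μ • f' (x : V) = (x : V) := by rw [← hfx, hff']
      have hval : f' (x : V) = μ⁻¹ • (x : V) :=
        ((inv_smul_eq_iff₀ hμ0).mpr this.symm).symm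
      simp [LinearMap.restrict_apply, hval]
      exact hval
    rw [this, map_smul, trace_id]
    simp [mul_comm]
  have htr : V.character g = ∑ μ ∈ hfin.toFinset, μ * (finrank ℂ (E μ) : ℂ) := by
    rw [show V.character g = trace ℂ V f from rfl,
      trace_eq_sum_trace_restrict' hInt hfin hmapsf]
    exact Finset.sum_congr rfl hrestrf
  have htr' : V.character g⁻¹ = ∑ μ ∈ hfin.toFinset, μ⁻¹ * (finrank ℂ (E μ) : ℂ) := by
    rw [show V.character g⁻¹ = trace ℂ V f' from rfl,
      trace_eq_sum_trace_restrict' hInt hfin hmapsf']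
    exact Finset.sum_congr rfl hrestrf'
  rw [htr, htr', map_sum]
  refine Finset.sum_congr rfl fun μ hμ => ?_
  have hμn : μ ^ n = 1 := hroot μ (by simpa using hμ)
  have hnorm : ‖μ‖ = 1 := by
    have h1 : ‖μ‖ ^ n = 1 := by rw [← norm_pow, hμn, norm_one]
    exact (pow_left_inj₀ (norm_nonneg μ) zero_le_one hn0).mp (by rw [h1, one_pow])
  rw [map_mul, ← Complex.inv_eq_conj hnorm]
  congr 1
  simp
open Module LinearMap Representation

lemma simple_nontrivial {G : Type} [Group G] (V : FDRep ℂ G) [CategoryTheory.Simple V] :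
    Nontrivial V := by
  by_contra h
  have hsub : Subsingleton V := not_nontrivial_iff_subsingleton.mp h
  apply CategoryTheory.id_nonzero V
  apply Action.hom_ext
  ext v
  exact @Subsingleton.elim _ hsub _ _

lemma char_one_ne_zero {G : Type} [Group G] (V : FDRep ℂ G) [CategoryTheory.Simple V] :
    V.character 1 ≠ 0 := by
  have hnt : Nontrivial V := simple_nontrivial V
  have h : finrank ℂ V ≠ 0 := (finrank_pos (R := ℂ) (M := V)).ne'
  simp only [FDRep.char_one]
  exact_mod_cast h

lemma frobenius_formula {G : Type} [Group G] [Fintype G] (V : FDRep ℂ G)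
    [CategoryTheory.Simple V] (a b : G) :
    ∑ y : G, V.character (a * (y * b * y⁻¹))
      = (Fintype.card G : ℂ) * V.character a * V.character b / V.character 1 := by
  classical
  have hχ1ne : V.character 1 ≠ 0 := char_one_ne_zero V
  set T : Module.End ℂ V := ∑ y : G, (V.ρ y) * (V.ρ b) * (V.ρ y⁻¹) with hT
  -- T is an invariant of linHom V.ρ V.ρ
  have hTmem : T ∈ (linHom V.ρ V.ρ).invariants := by
    rw [mem_invariants]
    intro g
    rw [linHom_apply]
    have : V.ρ g ∘ₗ T ∘ₗ V.ρ g⁻¹ = (V.ρ g) * T * (V.ρ g⁻¹) := rfl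
    rw [this, hT, Finset.mul_sum, Finset.sum_mul]
    apply Fintype.sum_equiv (Equiv.mulLeft g)
    intro y
    simp only [Equiv.coe_mulLeft, mul_inv_rev, map_mul]
    simp [mul_assoc]
  have hidmem : (LinearMap.id : V →ₗ[ℂ] V) ∈ (linHom V.ρ V.ρ).invariants := by
    rw [mem_invariants]
    intro g
    rw [linHom_apply]
    ext v
    show (V.ρ g * V.ρ g⁻¹) v = v
    rw [← map_mul, mul_inv_cancel, map_one, Module.End.one_apply]
  have hidne : (⟨LinearMap.id, hidmem⟩ : (linHom V.ρ V.ρ).invariants) ≠ 0 := by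
    intro h
    have hnt : Nontrivial V := simple_nontrivial V
    obtain ⟨v, hv⟩ := exists_ne (0 : V)
    have := congrArg (fun f => (f : V →ₗ[ℂ] V) v) (Subtype.ext_iff.mp h)
    simp at this
    exact hv this
  have hfr1 : finrank ℂ ((linHom V.ρ V.ρ).invariants) = 1 := by
    rw [(Representation.linHom.invariantsEquivFDRepHom (k := ℂ) (G := G) V V).finrank_eq,
      CategoryTheory.finrank_hom_simple_simple ℂ V V, if_pos ⟨CategoryTheory.Iso.refl V⟩]
  -- T = c • id
  obtain ⟨c, hc⟩ : ∃ c : ℂ, T = c • (LinearMap.id : V →ₗ[ℂ] V) := by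
    have hspan := (finrank_eq_one_iff_of_nonzero' (⟨LinearMap.id, hidmem⟩ :
      (linHom V.ρ V.ρ).invariants) hidne).mp hfr1
    obtain ⟨c, hc⟩ := hspan ⟨T, hTmem⟩
    exact ⟨c, by simpa [Subtype.ext_iff] using hc.symm⟩
  -- trace computations
  have htrT : trace ℂ V T = (Fintype.card G : ℂ) * V.character b := by
    rw [hT, map_sum]
    have : ∀ y : G, trace ℂ V (V.ρ y * V.ρ b * V.ρ y⁻¹) = V.character b := by
      intro y
      rw [trace_mul_comm, ← mul_assoc, ← map_mul, ← map_mul, inv_mul_cancel, one_mul]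
      rfl
    simp [this, Finset.sum_const, mul_comm]
  have htrT' : trace ℂ V T = c * V.character 1 := by
    rw [hc, map_smul, trace_id]
    simp [smul_eq_mul, FDRep.char_one, mul_comm]
  have hcval : c = (Fintype.card G : ℂ) * V.character b / V.character 1 := by
    rw [eq_div_iff hχ1ne, ← htrT', htrT]
  calc ∑ y : G, V.character (a * (y * b * y⁻¹))
      = trace ℂ V ((V.ρ a) * T) := by
        rw [hT, Finset.mul_sum, map_sum]
        apply Finset.sum_congr rfl
        intro y _
        show V.character _ = trace ℂ V _
        rw [show V.ρ a * (V.ρ y * V.ρ b * V.ρ y⁻¹) = V.ρ (a * (y * b * y⁻¹)) by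
          simp [map_mul, mul_assoc]]
        rfl
    _ = c * V.character a := by
        rw [hc]
        have : (V.ρ a) * (c • (LinearMap.id : V →ₗ[ℂ] V)) = c • (V.ρ a : V →ₗ[ℂ] V) := by
          ext v; simp
        rw [this, map_smul]
        rfl
    _ = (Fintype.card G : ℂ) * V.character a * V.character b / V.character 1 := by
        rw [hcval]; ring
open Finset

variable {G : Type} [Group G] [Fintype G] [DecidableEq G]

lemma helper1 (x y z : G) :
    x⁻¹ * z⁻¹ * x * z = x⁻¹ * y⁻¹ * x * y ↔ x * (z * y⁻¹) = z * y⁻¹ * x := by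
  rw [show x⁻¹ * z⁻¹ * x * z = x⁻¹ * (z⁻¹ * x * z) by group,
    show x⁻¹ * y⁻¹ * x * y = x⁻¹ * (y⁻¹ * x * y) by group, mul_right_inj]
  constructor
  · intro h
    have := congrArg (fun t => z * t * y⁻¹) h
    simpa [mul_assoc] using this
  · intro h
    have := congrArg (fun t => z⁻¹ * t * y) h
    rw [show z⁻¹ * (x * (z * y⁻¹)) * y = z⁻¹ * x * z * (y⁻¹ * y) by group] at this
    rw [show z⁻¹ * (z * y⁻¹ * x) * y = y⁻¹ * x * y by group] at this
    simpa using this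

lemma helper2 (r x : G) (hconj : IsConj r x) :
    (univ.filter fun u => u⁻¹ * r * u = x).card
      = (univ.filter fun w => x * w = w * x).card := by
  obtain ⟨u₀, hu₀⟩ := isConj_iff.mp hconj
  apply Finset.card_bij' (fun u _ => u₀ * u) (fun w _ => u₀⁻¹ * w)
  · intro u hu
    simp only [mem_filter, mem_univ, true_and] at hu ⊢
    have hr : r = u₀⁻¹ * x * u₀ := by rw [← hu₀]; group
    rw [hr] at hu
    have := congrArg (fun t => (u₀ * u) * t) hu
    rw [show u₀ * u * (u⁻¹ * (u₀⁻¹ * x * u₀) * u) = x * (u₀ * u) by group] at this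
    exact this
  · intro w hw
    simp only [mem_filter, mem_univ, true_and] at hw ⊢
    have hr : r = u₀⁻¹ * x * u₀ := by rw [← hu₀]; group
    rw [hr]
    rw [show (u₀⁻¹ * w)⁻¹ * (u₀⁻¹ * x * u₀) * (u₀⁻¹ * w) = w⁻¹ * x * w by group]
    rw [show w⁻¹ * x * w = w⁻¹ * (x * w) by group, hw]
    group
  · intros; group
  · intros; group

lemma lemC (reps : Finset G) (repf : G → G)
    (hmem : ∀ g, repf g ∈ reps)
    (hconj : ∀ g, IsConj (repf g) g)
    (hfix : ∀ r ∈ reps, ∀ u : G, repf (u⁻¹ * r * u) = r)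
    (h : G → ℂ) (hclass : ∀ u x : G, h (u⁻¹ * x * u) = h x) :
    ∑ x : G, ((univ.filter fun w => x * w = w * x).card : ℂ) * h x
      = ∑ r ∈ reps, (Fintype.card G : ℂ) * h r := by
  have lhs_eq : ∑ x : G, ((univ.filter fun w => x * w = w * x).card : ℂ) * h x
      = ∑ r ∈ reps, ∑ x ∈ univ.filter fun x => repf x = r,
          ((univ.filter fun w => x * w = w * x).card : ℂ) * h x :=
    (Finset.sum_fiberwise_of_maps_to (fun x _ => hmem x) _).symm
  rw [lhs_eq]
  refine Finset.sum_congr rfl fun r hr => ?_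
  -- RHS for fixed r : card G * h r = ∑ u : G, h (u⁻¹ * r * u)
  have rhs_eq : (Fintype.card G : ℂ) * h r = ∑ u : G, h (u⁻¹ * r * u) := by
    simp [hclass, Finset.sum_const, card_univ, mul_comm]
  rw [rhs_eq]
  rw [← Finset.sum_fiberwise_of_maps_to (g := fun u : G => u⁻¹ * r * u)
    (t := univ.filter fun x => repf x = r)
    (fun u _ => by simp [hfix r hr u]) (fun u => h (u⁻¹ * r * u))]
  refine Finset.sum_congr rfl fun x hx => ?_
  simp only [mem_filter, mem_univ, true_and] at hx
  have hcx : IsConj r x := by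
    rw [← hx]; exact hconj x
  symm
  calc ∑ u ∈ univ.filter fun u : G => u⁻¹ * r * u = x, h (u⁻¹ * r * u)
      = ∑ u ∈ univ.filter fun u : G => u⁻¹ * r * u = x, h x := by
        refine Finset.sum_congr rfl fun u hu => ?_
        simp only [mem_filter, mem_univ, true_and] at hu
        rw [hu]
    _ = ((univ.filter fun u : G => u⁻¹ * r * u = x).card : ℂ) * h x := by
        simp [Finset.sum_const, mul_comm]
    _ = ((univ.filter fun w : G => x * w = w * x).card : ℂ) * h x := by
        rw [helper2 r x hcx]

/-- `χ` is the character of an irreducible complex representation of `G`. -/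
def IsIrredChar (G : Type) [Group G] (χ : G → ℂ) : Prop :=
  ∃ V : FDRep ℂ G, CategoryTheory.Simple V ∧ χ = V.character

/-- the number of ordered triples `(x,y,z)` with `[x,y] = g = [x,z]`,
where `[x,y] = x⁻¹y⁻¹xy`. -/
noncomputable def t3 {G : Type} [Group G] (g : G) : ℕ :=
  Nat.card {t : G × G × G //
    t.1⁻¹ * t.2.1⁻¹ * t.1 * t.2.1 = g ∧
    t.1⁻¹ * t.2.2⁻¹ * t.1 * t.2.2 = g}

theorem stmt2 {G : Type} [Group G] [Fintype G]
    (reps : Finset G) (hreps : ∀ g : G, ∃! x, x ∈ reps ∧ IsConj x g)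
    (χ : G → ℂ) (hχ : IsIrredChar G χ) :
    (1 / (Fintype.card G : ℂ)) * ∑ g : G, (t3 g : ℂ) * (starRingEnd ℂ) (χ g)
      = ∑ x ∈ reps, ((Fintype.card G : ℂ) / χ 1) * ((‖χ x‖ : ℝ) : ℂ) ^ 2 := by
  classical
  obtain ⟨V, hV, rfl⟩ := hχ
  haveI := hV
  set nc : ℂ := (Fintype.card G : ℂ) with hnc
  have hχ1ne : V.character 1 ≠ 0 := char_one_ne_zero V
  have hncne : nc ≠ 0 := Nat.cast_ne_zero.mpr Fintype.card_ne_zero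
  -- the representative function
  have hex : ∀ g : G, ∃ x, (x ∈ reps ∧ IsConj x g) ∧
      ∀ y, (y ∈ reps ∧ IsConj y g) → y = x := fun g => hreps g
  choose repf hp hu using hex
  have hmem : ∀ g, repf g ∈ reps := fun g => (hp g).1
  have hconj : ∀ g, IsConj (repf g) g := fun g => (hp g).2
  have hfix : ∀ r ∈ reps, ∀ u : G, repf (u⁻¹ * r * u) = r := by
    intro r hr u
    exact (hu (u⁻¹ * r * u) r ⟨hr, isConj_iff.mpr ⟨u⁻¹, by group⟩⟩).symm
  -- class function h
  set h : G → ℂ := fun x => nc * (V.character x * (starRingEnd ℂ) (V.character x)) / V.character 1 with hh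
  have hχclass : ∀ u x : G, V.character (u⁻¹ * x * u) = V.character x := by
    intro u x
    simpa using FDRep.char_conj V x u⁻¹
  have hclass : ∀ u x : G, h (u⁻¹ * x * u) = h x := by
    intro u x; simp only [hh, hχclass]
  -- step 1 : t3 as a triple sum
  have ht3 : ∀ g : G, (t3 g : ℂ) = ∑ t : G × G × G,
      if (t.1⁻¹ * t.2.1⁻¹ * t.1 * t.2.1 = g ∧ t.1⁻¹ * t.2.2⁻¹ * t.1 * t.2.2 = g)
      then (1 : ℂ) else 0 := by
    intro g
    rw [t3, Nat.card_eq_fintype_card, Fintype.card_subtype, Finset.card_filter]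
    push_cast
    simp [apply_ite (Nat.cast : ℕ → ℂ)]
  -- step 2 : inner sum over g
  have hg : ∀ c1 c2 : G, (∑ g : G, if (c1 = g ∧ c2 = g) then (starRingEnd ℂ) (V.character g) else 0)
      = if c2 = c1 then (starRingEnd ℂ) (V.character c1) else 0 := by
    intro c1 c2
    by_cases h2 : c2 = c1
    · subst h2
      simp [Finset.sum_ite_eq]
    · rw [if_neg h2]
      apply Finset.sum_eq_zero
      intro g _
      rw [if_neg]
      rintro ⟨e1, e2⟩
      exact h2 (e2.trans e1.symm)
  -- step 3 : inner sum over z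
  have hz : ∀ x y : G, (∑ z : G, if x⁻¹ * z⁻¹ * x * z = x⁻¹ * y⁻¹ * x * y
        then (starRingEnd ℂ) (V.character (x⁻¹ * y⁻¹ * x * y)) else 0)
      = ((univ.filter fun w : G => x * w = w * x).card : ℂ)
          * (starRingEnd ℂ) (V.character (x⁻¹ * y⁻¹ * x * y)) := by
    intro x y
    rw [← Finset.sum_filter, Finset.sum_const, nsmul_eq_mul]
    congr 2
    have hset : (univ.filter fun z : G => x⁻¹ * z⁻¹ * x * z = x⁻¹ * y⁻¹ * x * y)
        = univ.filter fun z : G => x * (z * y⁻¹) = z * y⁻¹ * x := by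
      ext z; simp [helper1]
    rw [hset]
    apply Finset.card_bij' (fun z _ => z * y⁻¹) (fun w _ => w * y)
    · intro z hz
      simp only [mem_filter, mem_univ, true_and] at hz ⊢
      exact hz
    · intro w hw
      simp only [mem_filter, mem_univ, true_and] at hw ⊢
      simpa [mul_assoc] using hw
    · intros; simp [mul_assoc]
    · intros; simp [mul_assoc]
  -- step 4 : Frobenius for the y-sum
  have hy : ∀ x : G, (∑ y : G, V.character (x⁻¹ * y⁻¹ * x * y)) = nc * V.character x⁻¹ * V.character x / V.character 1 := by
    intro x
    have hfr := frobenius_formula V x⁻¹ x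
    rw [hnc, ← hfr,
      ← Equiv.sum_comp (Equiv.inv G) (fun y => V.character (x⁻¹ * (y * x * y⁻¹)))]
    apply Finset.sum_congr rfl
    intro y _
    show V.character _ = V.character _
    congr 1
    show x⁻¹ * y⁻¹ * x * y = x⁻¹ * (y⁻¹ * x * y⁻¹⁻¹)
    group
  have hyconj : ∀ x : G, (∑ y : G, (starRingEnd ℂ) (V.character (x⁻¹ * y⁻¹ * x * y))) = h x := by
    intro x
    rw [← map_sum, hy x, hh]
    rw [map_div₀, map_mul, map_mul, hnc, map_natCast]
    rw [char_inv V x, show ((starRingEnd ℂ) ((starRingEnd ℂ) (V.character x)))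
      = V.character x from Complex.conj_conj _]
    congr 1
    · ring_nf
    · rw [FDRep.char_one, map_natCast]
  -- main computation
  have key : (∑ g : G, (t3 g : ℂ) * (starRingEnd ℂ) (V.character g))
      = ∑ x : G, ((univ.filter fun w : G => x * w = w * x).card : ℂ) * h x := by
    simp_rw [ht3, Finset.sum_mul, ite_mul, one_mul, zero_mul]
    rw [Finset.sum_comm]
    have step : ∀ t : G × G × G, (∑ g : G,
        if (t.1⁻¹ * t.2.1⁻¹ * t.1 * t.2.1 = g ∧ t.1⁻¹ * t.2.2⁻¹ * t.1 * t.2.2 = g)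
        then (starRingEnd ℂ) (V.character g) else 0)
        = if t.1⁻¹ * t.2.2⁻¹ * t.1 * t.2.2 = t.1⁻¹ * t.2.1⁻¹ * t.1 * t.2.1
          then (starRingEnd ℂ) (V.character (t.1⁻¹ * t.2.1⁻¹ * t.1 * t.2.1)) else 0 :=
      fun t => hg _ _
    simp_rw [step]
    rw [Fintype.sum_prod_type]
    apply Finset.sum_congr rfl
    intro x _
    rw [Fintype.sum_prod_type]
    calc (∑ y : G, ∑ z : G, if x⁻¹ * z⁻¹ * x * z = x⁻¹ * y⁻¹ * x * y
            then (starRingEnd ℂ) (V.character (x⁻¹ * y⁻¹ * x * y)) else 0)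
        = ∑ y : G, ((univ.filter fun w : G => x * w = w * x).card : ℂ)
            * (starRingEnd ℂ) (V.character (x⁻¹ * y⁻¹ * x * y)) := by
          exact Finset.sum_congr rfl fun y _ => hz x y
      _ = ((univ.filter fun w : G => x * w = w * x).card : ℂ) * h x := by
          rw [← Finset.mul_sum, hyconj x]
  rw [key, lemC reps repf hmem hconj hfix h hclass, Finset.mul_sum]
  apply Finset.sum_congr rfl
  intro r _
  have habs : ((‖V.character r‖ : ℝ) : ℂ) ^ 2 = V.character r * (starRingEnd ℂ) (V.character r) := by
    rw [show ((‖V.character r‖ : ℝ) : ℂ) ^ 2 = ((‖V.character r‖ ^ 2 : ℝ) : ℂ) by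
      push_cast; ring, Complex.sq_norm, Complex.mul_conj]
  rw [habs, hh]
  field_simp
  rw [hnc]
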